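/- Let α > 0, let f ∈ L¹[−π,π] with f ≥ 0, let b ∈ (−π,0) ∪ (0,π), let f_H be the polarization of f with respect to b, and let u_f and u_{f_H} be the solutions of the Robin problem with heat sources f and f_H respectively. If φ : ℝ → ℝ is convex and strictly increasing, then ∫_{−π}^{π} φ(u_f(x)) dx = ∫_{−π}^{π} φ(u_{f_H}(x)) dx if and only if f = f_H almost everywhere on [−π,π]. -/

import Mathlib

open MeasureTheory Real Set

/-- The constant `c_α = α/(1+απ)`. -/
noncomputable def cA (α : ℝ) : ℝ := α / (1 + α * π)

/-- The Green's function of the Robin problem on `[-π, π]`. -/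
noncomputable def robinGreen (α x y : ℝ) : ℝ :=
  -(1/2) * cA α * x * y - (1/2) * |x - y| + 1 / (2 * cA α)

/-- The solution of the Robin problem with heat source `f`. -/
noncomputable def robinSol (α : ℝ) (f : ℝ → ℝ) (x : ℝ) : ℝ :=
  ∫ y in (-π)..π, robinGreen α x y * f y

/-- The polarization (towards zero) of `f : [-π,π] → ℝ` with respect to `b`. -/
noncomputable def polar (b : ℝ) (f : ℝ → ℝ) (x : ℝ) : ℝ :=
  if 0 < b then
    if x < 2 * b - π then f x
    else if x ≤ b then max (f x) (f (2 * b - x))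
    else min (f x) (f (2 * b - x))
  else
    if x ≤ b then min (f x) (f (2 * b - x))
    else if x ≤ 2 * b + π then max (f x) (f (2 * b - x))
    else f x

/-! ### Auxiliary definitions and lemmas -/

open intervalIntegral

/-- The difference of Green's function values at a point and its reflection. -/
noncomputable def DD (α b x y : ℝ) : ℝ := robinGreen α x y - robinGreen α x (2*b - y)

lemma cA_pos {α : ℝ} (hα : 0 < α) : 0 < cA α := by
  have h1 : 0 < 1 + α * π := by positivity
  exact div_pos hα h1

lemma cA_pi_lt_one {α : ℝ} (hα : 0 < α) : cA α * π < 1 := by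
  have h1 : 0 < 1 + α * π := by positivity
  rw [cA, div_mul_eq_mul_div, div_lt_one h1]
  linarith

lemma green_symm (α x y : ℝ) : robinGreen α x y = robinGreen α y x := by
  unfold robinGreen; rw [abs_sub_comm]; ring

lemma green_neg (α x y : ℝ) : robinGreen α (-x) (-y) = robinGreen α x y := by
  unfold robinGreen
  have h : -x - -y = -(x - y) := by ring
  rw [h, abs_neg]; ring

lemma DD_add_reflect (α b x y : ℝ) :
    DD α b x y + DD α b (2*b - x) y = 2 * cA α * b * (b - y) := by
  unfold DD robinGreen
  have h1 : x - (2*b - y) = -(2*b - x - y) := by ring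
  have h2 : 2*b - x - (2*b - y) = -(x - y) := by ring
  rw [h1, h2, abs_neg, abs_neg]
  ring

lemma green_diff1 (α b x y : ℝ) :
    robinGreen α x (2*b - y) - robinGreen α (2*b - x) y = cA α * b * (y - x) := by
  unfold robinGreen
  have h1 : x - (2*b - y) = -(2*b - x - y) := by ring
  rw [h1, abs_neg]
  ring

lemma green_diff2 (α b x y : ℝ) :
    robinGreen α x y - robinGreen α (2*b - x) (2*b - y) = cA α * b * (2*b - x - y) := by
  unfold robinGreen
  have h1 : 2*b - x - (2*b - y) = -(x - y) := by ring
  rw [h1, abs_neg]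
  ring

lemma DD_nonneg {α : ℝ} (hα : 0 < α) {b x y : ℝ} (hb : 0 < b) (hbπ : b < π)
    (hx : -π ≤ x) (hxb : x ≤ b) (hy : 2*b - π ≤ y) (hyb : y ≤ b) :
    0 ≤ DD α b x y := by
  have hc : 0 < cA α := cA_pos hα
  have hcπ : cA α * π < 1 := cA_pi_lt_one hα
  unfold DD robinGreen
  have h1 : |x - (2*b - y)| = 2*b - x - y := by
    rw [abs_of_nonpos (by linarith)]; ring
  rw [h1]
  rcases le_total x y with hxy | hxy
  · rw [abs_of_nonpos (by linarith : x - y ≤ 0)]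
    have h2 : 0 < 1 + cA α * x := by nlinarith
    nlinarith [mul_nonneg h2.le (sub_nonneg.2 hyb)]
  · rw [abs_of_nonneg (by linarith : 0 ≤ x - y)]
    rcases le_total 0 x with hx0 | hx0
    · nlinarith [mul_nonneg (mul_nonneg hc.le hx0) (by linarith : (0:ℝ) ≤ b - y)]
    · have h3 : cA α * (b - y) < 1 := by nlinarith
      nlinarith [mul_nonneg (neg_nonneg.2 hx0) (by nlinarith : (0:ℝ) ≤ 1 - cA α * (b - y))]

/-! ### Four point convexity lemmas -/

lemma fourpoint_aux {φ : ℝ → ℝ} (hφconv : ConvexOn ℝ univ φ) (hφmono : StrictMono φ)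
    {p q p' q' : ℝ} (h1 : p ≤ p') (h3 : p + q ≤ p' + q') (hqp : q ≤ p) :
    φ p + φ q ≤ φ p' + φ q' := by
  rcases le_or_gt q q' with hq | hq
  · have m1 := hφmono.monotone h1
    have m2 := hφmono.monotone hq
    linarith
  · have hpp : p < p' := by linarith
    have hS : (φ q - φ q') / (q - q') ≤ (φ p' - φ p) / (p' - p) := by
      rcases eq_or_lt_of_le hqp with rfl | hqp'
      · exact hφconv.slope_mono_adjacent (mem_univ q') (mem_univ p') hq hpp
      · exact le_trans
          (hφconv.slope_mono_adjacent (mem_univ q') (mem_univ p) hq hqp')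
          (hφconv.slope_mono_adjacent (mem_univ q) (mem_univ p') hqp' hpp)
    have hS2 : 0 ≤ (φ p' - φ p) / (p' - p) :=
      div_nonneg (by linarith [hφmono.monotone hpp.le]) (by linarith)
    have e1 : φ q - φ q' ≤ (φ p' - φ p) / (p' - p) * (q - q') := by
      rw [← div_le_iff₀ (by linarith : (0:ℝ) < q - q')]
      exact hS
    have e2 : (φ p' - φ p) / (p' - p) * (q - q') ≤ (φ p' - φ p) / (p' - p) * (p' - p) :=
      mul_le_mul_of_nonneg_left (by linarith) hS2
    have e3 : (φ p' - φ p) / (p' - p) * (p' - p) = φ p' - φ p :=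
      div_mul_cancel₀ _ (by intro h; exact absurd h (by intro h'; linarith [sub_eq_zero.mp h']))
    linarith

lemma fourpoint {φ : ℝ → ℝ} (hφconv : ConvexOn ℝ univ φ) (hφmono : StrictMono φ)
    {p q p' q' : ℝ} (h1 : p ≤ p') (h2 : q ≤ p') (h3 : p + q ≤ p' + q') :
    φ p + φ q ≤ φ p' + φ q' := by
  rcases le_total q p with h | h
  · exact fourpoint_aux hφconv hφmono h1 h3 h
  · have := fourpoint_aux hφconv hφmono h2 (by linarith) h
    linarith

lemma fourpoint_eq {φ : ℝ → ℝ} (hφconv : ConvexOn ℝ univ φ) (hφmono : StrictMono φ)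
    {p q p' q' : ℝ} (h1 : p ≤ p') (h2 : q ≤ p') (h3 : p + q ≤ p' + q')
    (heq : φ p + φ q = φ p' + φ q') : p + q = p' + q' := by
  by_contra hne
  have hlt : p + q < p' + q' := lt_of_le_of_ne h3 hne
  have h4 : φ p + φ q ≤ φ p' + φ (p + q - p') :=
    fourpoint hφconv hφmono h1 h2 (by linarith)
  have h5 : φ (p + q - p') < φ q' := hφmono (by linarith)
  linarith

/-! ### Integrability and continuity -/

lemma mulII {k g : ℝ → ℝ} (hk : Continuous k) {lo hi : ℝ} (hg : IntegrableOn g (Icc lo hi))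
    {a c : ℝ} (ha : lo ≤ a) (hac : a ≤ c) (hc : c ≤ hi) :
    IntervalIntegrable (fun y => k y * g y) volume a c := by
  rw [intervalIntegrable_iff_integrableOn_Ioc_of_le hac]
  exact IntegrableOn.continuousOn_mul_of_subset hk.continuousOn
    (hg.mono_set (Ioc_subset_Icc_self.trans (Icc_subset_Icc ha hc)))
    isCompact_Icc measurableSet_Ioc (Ioc_subset_Icc_self.trans (Icc_subset_Icc ha hc))

lemma reflII {g : ℝ → ℝ} (hg : IntegrableOn g (Icc (-π) π)) {b : ℝ} (hb : 0 ≤ b) (hbπ : b ≤ π) :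
    IntegrableOn (fun y => g (2*b - y)) (Icc (2*b - π) π) := by
  have hπ := pi_pos
  have h1 : IntervalIntegrable g volume (2*b - π) π :=
    (intervalIntegrable_iff_integrableOn_Icc_of_le (by linarith)).mpr
      (hg.mono_set (Icc_subset_Icc (by linarith) le_rfl))
  have h2 := (h1.comp_sub_left (2*b)).symm
  have h3 : 2*b - (2*b - π) = π := by ring
  rw [h3] at h2
  exact (intervalIntegrable_iff_integrableOn_Icc_of_le (by linarith)).mp h2

lemma green_cont (α x : ℝ) : Continuous fun y => robinGreen α x y := by
  unfold robinGreen
  have h1 : Continuous fun y : ℝ => |x - y| := (continuous_const.sub continuous_id).abs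
  continuity

lemma green_cont' (α b x : ℝ) : Continuous fun y => robinGreen α x (2*b - y) :=
  (green_cont α x).comp (continuous_const.sub continuous_id)

lemma DD_cont (α b x : ℝ) : Continuous fun y => DD α b x y :=
  (green_cont α x).sub (green_cont' α b x)

lemma robinSol_cont {α : ℝ} (hα : 0 < α) {g : ℝ → ℝ} (hg : IntegrableOn g (Icc (-π) π)) :
    Continuous (robinSol α g) := by
  have hπ := pi_pos
  have hππ : -π ≤ π := by linarith
  have hc := cA_pos hα
  set L : ℝ := 1/2 * cA α * π + 1/2 with hL
  set C : ℝ := ∫ y in (-π)..π, |g y| with hC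
  have hC0 : 0 ≤ C := integral_nonneg hππ fun u _ => abs_nonneg _
  have hL0 : 0 ≤ L := by positivity
  have key : ∀ x z : ℝ, |robinSol α g x - robinSol α g z| ≤ L * C * |x - z| := by
    intro x z
    have II1 : IntervalIntegrable (fun y => robinGreen α x y * g y) volume (-π) π :=
      mulII (green_cont α x) hg le_rfl hππ le_rfl
    have II2 : IntervalIntegrable (fun y => robinGreen α z y * g y) volume (-π) π :=
      mulII (green_cont α z) hg le_rfl hππ le_rfl
    have e : robinSol α g x - robinSol α g z
        = ∫ y in (-π)..π, (robinGreen α x y - robinGreen α z y) * g y := by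
      rw [robinSol, robinSol, ← integral_sub II1 II2]
      apply integral_congr
      intro y _
      ring
    have hb : ∀ y ∈ Icc (-π) π, |robinGreen α x y - robinGreen α z y| ≤ L * |x - z| := by
      intro y hy
      have hy1 : |y| ≤ π := abs_le.mpr ⟨hy.1, hy.2⟩
      have e2 : robinGreen α x y - robinGreen α z y
          = -(1/2) * cA α * (x - z) * y - 1/2 * (|x - y| - |z - y|) := by
        unfold robinGreen; ring
      rw [e2]
      have t1 : |(-(1/2) * cA α * (x - z) * y) - 1/2 * (|x - y| - |z - y|)|
          ≤ |(-(1/2) * cA α * (x - z) * y)| + |1/2 * (|x - y| - |z - y|)| := abs_sub _ _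
      have t2 : |(-(1/2) * cA α * (x - z) * y)| = 1/2 * cA α * |x - z| * |y| := by
        rw [abs_mul, abs_mul, abs_mul, abs_neg]
        rw [abs_of_pos hc, abs_of_pos (by norm_num : (0:ℝ) < 1/2)]
      have t3 : |(1/2 : ℝ) * (|x - y| - |z - y|)| ≤ 1/2 * |x - z| := by
        rw [abs_mul, abs_of_pos (by norm_num : (0:ℝ) < 1/2)]
        have t4 := abs_abs_sub_abs_le_abs_sub (x - y) (z - y)
        have t5 : x - y - (z - y) = x - z := by ring
        rw [t5] at t4
        linarith
      have t6 : 1/2 * cA α * |x - z| * |y| ≤ 1/2 * cA α * |x - z| * π :=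
        mul_le_mul_of_nonneg_left hy1 (by positivity)
      calc |(-(1/2) * cA α * (x - z) * y) - 1/2 * (|x - y| - |z - y|)|
          ≤ |(-(1/2) * cA α * (x - z) * y)| + |1/2 * (|x - y| - |z - y|)| := t1
        _ ≤ 1/2 * cA α * |x - z| * π + 1/2 * |x - z| := by rw [t2]; linarith
        _ = L * |x - z| := by rw [hL]; ring
    have IId : IntervalIntegrable (fun y => (robinGreen α x y - robinGreen α z y) * g y)
        volume (-π) π :=
      mulII ((green_cont α x).sub (green_cont α z)) hg le_rfl hππ le_rfl
    have step1 : |∫ y in (-π)..π, (robinGreen α x y - robinGreen α z y) * g y|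
        ≤ ∫ y in (-π)..π, |(robinGreen α x y - robinGreen α z y) * g y| :=
      abs_integral_le_integral_abs hππ
    have step2 : (∫ y in (-π)..π, |(robinGreen α x y - robinGreen α z y) * g y|)
        ≤ ∫ y in (-π)..π, L * |x - z| * |g y| := by
      apply integral_mono_on hππ IId.abs (mulII continuous_const hg.abs le_rfl hππ le_rfl)
      intro y hy
      rw [abs_mul]
      exact mul_le_mul_of_nonneg_right (hb y hy) (abs_nonneg _)
    have step3 : (∫ y in (-π)..π, L * |x - z| * |g y|) = L * |x - z| * C := by
      rw [hC, ← intervalIntegral.integral_const_mul]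
    rw [e]
    calc |∫ y in (-π)..π, (robinGreen α x y - robinGreen α z y) * g y|
        ≤ ∫ y in (-π)..π, L * |x - z| * |g y| := le_trans step1 step2
      _ = L * |x - z| * C := step3
      _ = L * C * |x - z| := by ring
  have lip : LipschitzWith (Real.toNNReal (L * C)) (robinSol α g) := by
    apply LipschitzWith.of_dist_le_mul
    intro x z
    rw [Real.dist_eq, Real.dist_eq, Real.coe_toNNReal _ (by positivity)]
    exact key x z
  exact lip.continuous

/-! ### Pointwise lemmas about `polar` for `0 < b` -/

section PolarPos

variable {b : ℝ} {f : ℝ → ℝ}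

lemma polar_left (hb : 0 < b) {x : ℝ} (h : x < 2*b - π) : polar b f x = f x := by
  simp only [polar, if_pos hb, if_pos (show x < 2*b - π from h)]

lemma polar_mid (hb : 0 < b) {x : ℝ} (h1 : 2*b - π ≤ x) (h2 : x ≤ b) :
    polar b f x = max (f x) (f (2*b - x)) := by
  simp only [polar, if_pos hb, if_neg (not_lt.mpr (show 2*b - π ≤ x from h1)), if_pos h2]

lemma polar_right (hb : 0 < b) {x : ℝ} (h1 : 2*b - π ≤ x) (h2 : b < x) :
    polar b f x = min (f x) (f (2*b - x)) := by
  simp only [polar, if_pos hb, if_neg (not_lt.mpr (show 2*b - π ≤ x from h1)),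
    if_neg (not_le.mpr h2)]

lemma polar_reflect (hb : 0 < b) (hbπ : b < π) {y : ℝ} (h1 : 2*b - π ≤ y) (h2 : y ≤ b) :
    polar b f (2*b - y) = min (f (2*b - y)) (f y) := by
  have e : 2*b - (2*b - y) = y := by ring
  rcases lt_or_eq_of_le h2 with h2' | h2'
  · rw [polar_right hb (by linarith) (by linarith), e]
  · have e2 : 2*b - y = y := by rw [h2']; ring
    rw [e2, polar_mid hb h1 h2, e2, max_self, min_self]

lemma polar_sum (hb : 0 < b) (hbπ : b < π) {y : ℝ} (h1 : 2*b - π ≤ y) (h2 : y ≤ b) :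
    polar b f y + polar b f (2*b - y) = f y + f (2*b - y) := by
  rw [polar_mid hb h1 h2, polar_reflect hb hbπ h1 h2, min_comm]
  rw [max_add_min]

lemma polar_h_nonneg (hb : 0 < b) {y : ℝ} (h1 : 2*b - π ≤ y) (h2 : y ≤ b) :
    0 ≤ polar b f y - f y := by
  rw [polar_mid hb h1 h2]
  simp [le_max_left]

lemma polar_integrableOn (hf : IntegrableOn f (Icc (-π) π)) (hb : 0 < b) (hbπ : b < π) :
    IntegrableOn (polar b f) (Icc (-π) π) := by
  have hπ := pi_pos
  have hg2 : IntegrableOn (fun y => f (2*b - y)) (Icc (2*b - π) π) := reflII hf hb.le hbπ.le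
  have hL : IntegrableOn (polar b f) (Ico (-π) (2*b - π)) := by
    refine (hf.mono_set (Ico_subset_Icc_self.trans (Icc_subset_Icc le_rfl (by linarith)))).congr_fun
      (fun y hy => ?_) measurableSet_Ico
    exact (polar_left hb hy.2).symm
  have hM : IntegrableOn (polar b f) (Icc (2*b - π) b) := by
    have h1 : IntegrableOn f (Icc (2*b - π) b) :=
      hf.mono_set (Icc_subset_Icc (by linarith) (by linarith))
    have h2 : IntegrableOn (fun y => f (2*b - y)) (Icc (2*b - π) b) :=
      hg2.mono_set (Icc_subset_Icc le_rfl (by linarith))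
    have h3 : IntegrableOn (f ⊔ fun y => f (2*b - y)) (Icc (2*b - π) b) volume := h1.sup h2
    refine h3.congr_fun (fun y hy => ?_) measurableSet_Icc
    rw [Pi.sup_apply]
    exact (polar_mid hb hy.1 hy.2).symm
  have hR : IntegrableOn (polar b f) (Ioc b π) := by
    have h1 : IntegrableOn f (Ioc b π) :=
      hf.mono_set (Ioc_subset_Icc_self.trans (Icc_subset_Icc (by linarith) le_rfl))
    have h2 : IntegrableOn (fun y => f (2*b - y)) (Ioc b π) :=
      hg2.mono_set (Ioc_subset_Icc_self.trans (Icc_subset_Icc (by linarith) le_rfl))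
    have h3 : IntegrableOn (f ⊓ fun y => f (2*b - y)) (Ioc b π) volume := h1.inf h2
    refine h3.congr_fun (fun y hy => ?_) measurableSet_Ioc
    rw [Pi.inf_apply]
    exact (polar_right hb (by linarith [hy.1]) hy.1).symm
  refine ((hL.union hM).union hR).mono_set ?_
  intro y hy
  rcases lt_or_ge y (2*b - π) with h | h
  · exact Or.inl (Or.inl ⟨hy.1, h⟩)
  · rcases le_or_gt y b with h' | h'
    · exact Or.inl (Or.inr ⟨h, h'⟩)
    · exact Or.inr ⟨h', hy.2⟩

end PolarPos

lemma ae_ne_vol (c : ℝ) : ∀ᵐ y : ℝ, y ≠ c := by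
  simp [ae_iff, measure_singleton]

/-! ### Integral decomposition lemmas for `0 < b < π` -/

section SolPos

variable {α b : ℝ} {f : ℝ → ℝ}

lemma split_reflect {g : ℝ → ℝ} (hg : IntegrableOn g (Icc (-π) π)) (hb : 0 < b) (hbπ : b < π)
    (k : ℝ → ℝ) (hk : Continuous k) :
    (∫ y in (-π)..π, k y * g y)
      = (∫ y in (-π)..(2*b - π), k y * g y)
        + ∫ y in (2*b - π)..b, (k y * g y + k (2*b - y) * g (2*b - y)) := by
  have hπ := pi_pos
  have hg2 : IntegrableOn (fun y => g (2*b - y)) (Icc (2*b - π) π) := reflII hg hb.le hbπ.le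
  have IA : IntervalIntegrable (fun y => k y * g y) volume (-π) (2*b - π) :=
    mulII hk hg le_rfl (by linarith) (by linarith)
  have IB : IntervalIntegrable (fun y => k y * g y) volume (2*b - π) b :=
    mulII hk hg (by linarith) (by linarith) (by linarith)
  have IC : IntervalIntegrable (fun y => k y * g y) volume b π :=
    mulII hk hg (by linarith) (by linarith) le_rfl
  have ICr : IntervalIntegrable (fun y => k (2*b - y) * g (2*b - y)) volume (2*b - π) b :=
    mulII (hk.comp (continuous_const.sub continuous_id)) hg2 le_rfl (by linarith) (by linarith)
  have h1 := integral_add_adjacent_intervals IA (IB.trans IC)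
  have h2 := integral_add_adjacent_intervals IB IC
  have h3 := integral_comp_sub_left (a := 2*b - π) (b := b) (fun y => k y * g y) (2*b)
  rw [show 2*b - b = b by ring, show 2*b - (2*b - π) = π by ring] at h3
  have h4 := integral_add IB ICr
  rw [h4]
  rw [h3]
  linarith [h1, h2]

lemma sol_diff (hα : 0 < α) (hf : IntegrableOn f (Icc (-π) π)) (hb : 0 < b) (hbπ : b < π)
    (x : ℝ) :
    robinSol α (polar b f) x - robinSol α f x
      = ∫ y in (2*b - π)..b, DD α b x y * (polar b f y - f y) := by
  have hπ := pi_pos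
  have hfH := polar_integrableOn hf hb hbπ
  rw [robinSol, robinSol, split_reflect hfH hb hbπ _ (green_cont α x),
    split_reflect hf hb hbπ _ (green_cont α x)]
  have hA : (∫ y in (-π)..(2*b - π), robinGreen α x y * polar b f y)
      = ∫ y in (-π)..(2*b - π), robinGreen α x y * f y := by
    apply intervalIntegral.integral_congr_ae
    filter_upwards [ae_ne_vol (2*b - π)] with y hy hmem
    rw [uIoc_of_le (by linarith : -π ≤ 2*b - π)] at hmem
    rw [polar_left hb (lt_of_le_of_ne hmem.2 hy)]
  have IB1 : IntervalIntegrable (fun y => robinGreen α x y * polar b f y) volume (2*b - π) b :=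
    mulII (green_cont α x) hfH (by linarith) (by linarith) (by linarith)
  have IB2 : IntervalIntegrable (fun y => robinGreen α x (2*b - y) * polar b f (2*b - y))
      volume (2*b - π) b :=
    mulII (green_cont' α b x) (reflII hfH hb.le hbπ.le) le_rfl (by linarith) (by linarith)
  have IC1 : IntervalIntegrable (fun y => robinGreen α x y * f y) volume (2*b - π) b :=
    mulII (green_cont α x) hf (by linarith) (by linarith) (by linarith)
  have IC2 : IntervalIntegrable (fun y => robinGreen α x (2*b - y) * f (2*b - y))
      volume (2*b - π) b :=
    mulII (green_cont' α b x) (reflII hf hb.le hbπ.le) le_rfl (by linarith) (by linarith)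
  have hSub : (∫ y in (2*b - π)..b,
        (robinGreen α x y * polar b f y + robinGreen α x (2*b - y) * polar b f (2*b - y)))
      - (∫ y in (2*b - π)..b,
        (robinGreen α x y * f y + robinGreen α x (2*b - y) * f (2*b - y)))
      = ∫ y in (2*b - π)..b, DD α b x y * (polar b f y - f y) := by
    rw [← integral_sub (IB1.add IB2) (IC1.add IC2)]
    apply integral_congr
    intro y hy
    rw [uIcc_of_le (by linarith : 2*b - π ≤ b)] at hy
    have hs := polar_sum (f := f) hb hbπ hy.1 hy.2
    have e : polar b f (2*b - y) - f (2*b - y) = -(polar b f y - f y) := by linarith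
    simp only [DD]
    linear_combination robinGreen α x (2*b - y) * e
  rw [hA]
  linarith [hSub]

lemma sol_le (hα : 0 < α) (hf : IntegrableOn f (Icc (-π) π)) (hb : 0 < b) (hbπ : b < π)
    {x : ℝ} (hx : -π ≤ x) (hxb : x ≤ b) :
    robinSol α f x ≤ robinSol α (polar b f) x := by
  have hπ := pi_pos
  rw [← sub_nonneg, sol_diff hα hf hb hbπ x]
  apply integral_nonneg (by linarith : 2*b - π ≤ b)
  intro y hy
  exact mul_nonneg (DD_nonneg hα hb hbπ hx hxb hy.1 hy.2) (polar_h_nonneg hb hy.1 hy.2)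

lemma sol_pair (hα : 0 < α) (hf : IntegrableOn f (Icc (-π) π)) (hb : 0 < b) (hbπ : b < π)
    (x : ℝ) :
    (robinSol α (polar b f) x - robinSol α f x)
      + (robinSol α (polar b f) (2*b - x) - robinSol α f (2*b - x))
      = ∫ y in (2*b - π)..b, 2 * cA α * b * (b - y) * (polar b f y - f y) := by
  have hπ := pi_pos
  have hfH := polar_integrableOn hf hb hbπ
  have hh : IntegrableOn (fun y => polar b f y - f y) (Icc (-π) π) := hfH.sub hf
  have I1 : IntervalIntegrable (fun y => DD α b x y * (polar b f y - f y)) volume (2*b - π) b :=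
    mulII (DD_cont α b x) hh (by linarith) (by linarith) (by linarith)
  have I2 : IntervalIntegrable (fun y => DD α b (2*b - x) y * (polar b f y - f y))
      volume (2*b - π) b :=
    mulII (DD_cont α b (2*b - x)) hh (by linarith) (by linarith) (by linarith)
  rw [sol_diff hα hf hb hbπ x, sol_diff hα hf hb hbπ (2*b - x), ← integral_add I1 I2]
  apply integral_congr
  intro y _
  have h := DD_add_reflect α b x y
  linear_combination (polar b f y - f y) * h

lemma sol_cross (hα : 0 < α) (hf : IntegrableOn f (Icc (-π) π))
    (hf0 : ∀ x ∈ Icc (-π) π, 0 ≤ f x) (hb : 0 < b) (hbπ : b < π)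
    {x : ℝ} (hx1 : 2*b - π ≤ x) (hx2 : x ≤ b) :
    robinSol α f (2*b - x) ≤ robinSol α (polar b f) x := by
  have hπ := pi_pos
  have hc := cA_pos hα
  have hfH := polar_integrableOn hf hb hbπ
  rw [← sub_nonneg, robinSol, robinSol, split_reflect hfH hb hbπ _ (green_cont α x),
    split_reflect hf hb hbπ _ (green_cont α (2*b - x))]
  have hA : (∫ y in (-π)..(2*b - π), robinGreen α x y * polar b f y)
      = ∫ y in (-π)..(2*b - π), robinGreen α x y * f y := by
    apply intervalIntegral.integral_congr_ae
    filter_upwards [ae_ne_vol (2*b - π)] with y hy hmem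
    rw [uIoc_of_le (by linarith : -π ≤ 2*b - π)] at hmem
    rw [polar_left hb (lt_of_le_of_ne hmem.2 hy)]
  rw [hA]
  have IA1 : IntervalIntegrable (fun y => robinGreen α x y * f y) volume (-π) (2*b - π) :=
    mulII (green_cont α x) hf le_rfl (by linarith) (by linarith)
  have IA2 : IntervalIntegrable (fun y => robinGreen α (2*b - x) y * f y) volume (-π) (2*b - π) :=
    mulII (green_cont α (2*b - x)) hf le_rfl (by linarith) (by linarith)
  have h1 : 0 ≤ (∫ y in (-π)..(2*b - π), robinGreen α x y * f y)
      - ∫ y in (-π)..(2*b - π), robinGreen α (2*b - x) y * f y := by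
    rw [← integral_sub IA1 IA2]
    apply integral_nonneg (by linarith : -π ≤ 2*b - π)
    intro y hy
    have e1 : robinGreen α x y - robinGreen α (2*b - x) y = DD α b y x := by
      unfold DD
      rw [green_symm α x y, green_symm α (2*b - x) y]
    have e1' : 0 ≤ DD α b y x :=
      DD_nonneg hα hb hbπ hy.1 (by linarith [hy.2]) hx1 hx2
    have e2 : 0 ≤ f y := hf0 y ⟨hy.1, by linarith [hy.2]⟩
    nlinarith [mul_nonneg e1' e2]
  have IB1 : IntervalIntegrable (fun y => robinGreen α x y * polar b f y) volume (2*b - π) b :=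
    mulII (green_cont α x) hfH (by linarith) (by linarith) (by linarith)
  have IB2 : IntervalIntegrable (fun y => robinGreen α x (2*b - y) * polar b f (2*b - y))
      volume (2*b - π) b :=
    mulII (green_cont' α b x) (reflII hfH hb.le hbπ.le) le_rfl (by linarith) (by linarith)
  have IC1 : IntervalIntegrable (fun y => robinGreen α (2*b - x) y * f y) volume (2*b - π) b :=
    mulII (green_cont α (2*b - x)) hf (by linarith) (by linarith) (by linarith)
  have IC2 : IntervalIntegrable (fun y => robinGreen α (2*b - x) (2*b - y) * f (2*b - y))
      volume (2*b - π) b :=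
    mulII (green_cont' α b (2*b - x)) (reflII hf hb.le hbπ.le) le_rfl (by linarith) (by linarith)
  have h2 : 0 ≤ (∫ y in (2*b - π)..b,
        (robinGreen α x y * polar b f y + robinGreen α x (2*b - y) * polar b f (2*b - y)))
      - ∫ y in (2*b - π)..b,
        (robinGreen α (2*b - x) y * f y + robinGreen α (2*b - x) (2*b - y) * f (2*b - y)) := by
    rw [← integral_sub (IB1.add IB2) (IC1.add IC2)]
    apply integral_nonneg (by linarith : 2*b - π ≤ b)
    intro y hy
    have hy1 := hy.1
    have hy2 := hy.2
    have hfy : 0 ≤ f y := hf0 y ⟨by linarith, by linarith⟩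
    have hfσ : 0 ≤ f (2*b - y) := hf0 (2*b - y) ⟨by linarith, by linarith⟩
    rw [polar_mid hb hy1 hy2, polar_reflect hb hbπ hy1 hy2]
    rcases le_total (f (2*b - y)) (f y) with hcase | hcase
    · rw [max_eq_left hcase, min_eq_left hcase]
      have e1 : robinGreen α x y - robinGreen α (2*b - x) y = DD α b y x := by
        unfold DD
        rw [green_symm α x y, green_symm α (2*b - x) y]
      have e2 : robinGreen α x (2*b - y) - robinGreen α (2*b - x) (2*b - y)
          = DD α b (2*b - y) x := by
        unfold DD
        rw [green_symm α x (2*b - y), green_symm α (2*b - x) (2*b - y)]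
      have e3 := DD_add_reflect α b y x
      have e4 : 0 ≤ DD α b y x :=
        DD_nonneg hα hb hbπ (by linarith) hy2 hx1 hx2
      have key : robinGreen α x y * f y + robinGreen α x (2*b - y) * f (2*b - y)
          - (robinGreen α (2*b - x) y * f y + robinGreen α (2*b - x) (2*b - y) * f (2*b - y))
          = DD α b y x * (f y - f (2*b - y)) + 2 * cA α * b * (b - x) * f (2*b - y) := by
        linear_combination f y * e1 + f (2*b - y) * e2 + f (2*b - y) * e3
      have e5 : 0 ≤ 2 * cA α * b * (b - x) * f (2*b - y) :=
        mul_nonneg (mul_nonneg (mul_nonneg (by positivity) hb.le) (by linarith)) hfσ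
      have e6 : 0 ≤ DD α b y x * (f y - f (2*b - y)) := mul_nonneg e4 (by linarith)
      linarith [key]
    · rw [max_eq_right hcase, min_eq_right hcase]
      have g1 := green_diff2 α b x y
      have g2 := green_diff1 α b x y
      have key : robinGreen α x y * f (2*b - y) + robinGreen α x (2*b - y) * f y
          - (robinGreen α (2*b - x) y * f y + robinGreen α (2*b - x) (2*b - y) * f (2*b - y))
          = cA α * b * (2*b - x - y) * f (2*b - y) + cA α * b * (y - x) * f y := by
        linear_combination f (2*b - y) * g1 + f y * g2
      rcases le_total x y with hxy | hxy
      · have c1 : 0 ≤ cA α * b * (2*b - x - y) * f (2*b - y) :=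
          mul_nonneg (mul_nonneg (mul_nonneg hc.le hb.le) (by linarith)) hfσ
        have c2 : 0 ≤ cA α * b * (y - x) * f y :=
          mul_nonneg (mul_nonneg (mul_nonneg hc.le hb.le) (by linarith)) hfy
        linarith [key]
      · have c3 : cA α * b * (2*b - x - y) * f y ≤ cA α * b * (2*b - x - y) * f (2*b - y) :=
          mul_le_mul_of_nonneg_left hcase (mul_nonneg (mul_nonneg hc.le hb.le) (by linarith))
        have c5 : 0 ≤ cA α * b * (2*(b - x)) * f y :=
          mul_nonneg (mul_nonneg (mul_nonneg hc.le hb.le) (by linarith)) hfy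
        have c6 : cA α * b * (2*b - x - y) * f y + cA α * b * (y - x) * f y
            = cA α * b * (2*(b - x)) * f y := by ring
        linarith [key, c3, c5, c6]
  linarith [h1, h2]

end SolPos

/-! ### Main forward lemma for `0 < b < π` -/

lemma main_pos (α : ℝ) (hα : 0 < α) (f : ℝ → ℝ) (hf : IntegrableOn f (Icc (-π) π))
    (hf0 : ∀ x ∈ Icc (-π) π, 0 ≤ f x) {b : ℝ} (hb : 0 < b) (hbπ : b < π)
    (φ : ℝ → ℝ) (hφconv : ConvexOn ℝ univ φ) (hφmono : StrictMono φ)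
    (heq : (∫ x in (-π)..π, φ (robinSol α f x)) = ∫ x in (-π)..π, φ (robinSol α (polar b f) x)) :
    f =ᵐ[volume.restrict (Icc (-π) π)] polar b f := by
  have hπ := pi_pos
  have hc := cA_pos hα
  have hfH := polar_integrableOn hf hb hbπ
  set u : ℝ → ℝ := robinSol α f with hu_def
  set v : ℝ → ℝ := robinSol α (polar b f) with hv_def
  have hu : Continuous u := robinSol_cont hα hf
  have hv : Continuous v := robinSol_cont hα hfH
  have hφc : Continuous φ := continuousOn_univ.mp (hφconv.continuousOn isOpen_univ)
  -- splitting of the outer integrals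
  have split3 : ∀ G : ℝ → ℝ, Continuous G →
      (∫ x in (-π)..π, G x) = (∫ x in (-π)..(2*b - π), G x)
        + ((∫ x in (2*b - π)..b, G x) + ∫ x in (2*b - π)..b, G (2*b - x)) := by
    intro G hG
    have h1 := integral_add_adjacent_intervals (hG.intervalIntegrable (μ := volume) (-π) (2*b - π))
      (hG.intervalIntegrable (μ := volume) (2*b - π) π)
    have h2 := integral_add_adjacent_intervals (hG.intervalIntegrable (μ := volume) (2*b - π) b)
      (hG.intervalIntegrable (μ := volume) b π)
    have h3 := integral_comp_sub_left (a := 2*b - π) (b := b) G (2*b)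
    rw [show 2*b - b = b by ring, show 2*b - (2*b - π) = π by ring] at h3
    rw [h3]
    linarith [h1, h2]
  have huc : Continuous fun x => φ (u x) := hφc.comp hu
  have hvc : Continuous fun x => φ (v x) := hφc.comp hv
  have hσc : Continuous (fun x : ℝ => 2*b - x) := continuous_const.sub continuous_id
  have hucσ : Continuous fun x => φ (u (2*b - x)) := huc.comp hσc
  have hvcσ : Continuous fun x => φ (v (2*b - x)) := hvc.comp hσc
  have hsplitu := split3 (fun x => φ (u x)) huc
  have hsplitv := split3 (fun x => φ (v x)) hvc
  -- pointwise inequalities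
  have hle1 : ∀ x ∈ Icc (-π) (2*b - π), φ (u x) ≤ φ (v x) := by
    intro x hx
    exact hφmono.monotone (sol_le hα hf hb hbπ hx.1 (by linarith [hx.2]))
  have hpair : ∀ x ∈ Icc (2*b - π) b,
      φ (u x) + φ (u (2*b - x)) ≤ φ (v x) + φ (v (2*b - x)) := by
    intro x hx
    have hx1 := hx.1
    have hx2 := hx.2
    have hp1 : u x ≤ v x := sol_le hα hf hb hbπ (by linarith) hx2
    have hp2 : u (2*b - x) ≤ v x := sol_cross hα hf hf0 hb hbπ hx1 hx2
    have hp3 : u x + u (2*b - x) ≤ v x + v (2*b - x) := by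
      have hps := sol_pair hα hf hb hbπ x
      have hnn : 0 ≤ ∫ y in (2*b - π)..b, 2 * cA α * b * (b - y) * (polar b f y - f y) := by
        apply integral_nonneg (by linarith : 2*b - π ≤ b)
        intro y hy
        exact mul_nonneg (mul_nonneg (mul_nonneg (by positivity) hb.le) (by linarith [hy.2]))
          (polar_h_nonneg hb hy.1 hy.2)
      linarith [hps, hnn]
    exact fourpoint hφconv hφmono hp1 hp2 hp3
  -- the two nonnegative pieces
  have hI1 : 0 ≤ (∫ x in (-π)..(2*b - π), φ (v x)) - ∫ x in (-π)..(2*b - π), φ (u x) := by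
    rw [← integral_sub (hvc.intervalIntegrable (μ := volume) _ _)
      (huc.intervalIntegrable (μ := volume) _ _)]
    apply integral_nonneg (by linarith : -π ≤ 2*b - π)
    intro x hx
    linarith [hle1 x hx]
  have hFcont : Continuous (fun x => φ (v x) + φ (v (2*b - x))
      - (φ (u x) + φ (u (2*b - x)))) := (hvc.add hvcσ).sub (huc.add hucσ)
  have hI2eq : (∫ x in (2*b - π)..b, (φ (v x) + φ (v (2*b - x)) - (φ (u x) + φ (u (2*b - x)))))
      = ((∫ x in (2*b - π)..b, φ (v x)) + ∫ x in (2*b - π)..b, φ (v (2*b - x)))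
        - ((∫ x in (2*b - π)..b, φ (u x)) + ∫ x in (2*b - π)..b, φ (u (2*b - x))) := by
    rw [← integral_add (hvc.intervalIntegrable (μ := volume) _ _)
        (hvcσ.intervalIntegrable (μ := volume) _ _),
      ← integral_add (huc.intervalIntegrable (μ := volume) _ _)
        (hucσ.intervalIntegrable (μ := volume) _ _),
      ← integral_sub (f := fun x => φ (v x) + φ (v (2*b - x)))
          (g := fun x => φ (u x) + φ (u (2*b - x))) ((hvc.add hvcσ).intervalIntegrable (μ := volume) _ _)
        ((huc.add hucσ).intervalIntegrable (μ := volume) _ _)]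
  have hI2 : 0 ≤ ∫ x in (2*b - π)..b,
      (φ (v x) + φ (v (2*b - x)) - (φ (u x) + φ (u (2*b - x)))) := by
    apply integral_nonneg (by linarith : 2*b - π ≤ b)
    intro x hx
    linarith [hpair x hx]
  -- total equality forces the pair integral to vanish
  have htot : (∫ x in (-π)..(2*b - π), φ (v x)) - (∫ x in (-π)..(2*b - π), φ (u x))
      + (∫ x in (2*b - π)..b, (φ (v x) + φ (v (2*b - x)) - (φ (u x) + φ (u (2*b - x))))) = 0 := by
    rw [hI2eq]
    simp only [hu_def, hv_def] at hsplitu hsplitv heq ⊢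
    linarith [hsplitu, hsplitv, heq]
  have hI2z : (∫ x in (2*b - π)..b,
      (φ (v x) + φ (v (2*b - x)) - (φ (u x) + φ (u (2*b - x))))) = 0 := by
    linarith [hI1, hI2, htot]
  -- evaluate at x = b
  have hFb : φ (v b) + φ (v (2*b - b)) - (φ (u b) + φ (u (2*b - b))) = 0 := by
    by_contra hne
    have hpos : 0 < φ (v b) + φ (v (2*b - b)) - (φ (u b) + φ (u (2*b - b))) := by
      have := hpair b ⟨by linarith, le_rfl⟩
      rcases lt_or_eq_of_le (by linarith [this] :
        (0:ℝ) ≤ φ (v b) + φ (v (2*b - b)) - (φ (u b) + φ (u (2*b - b)))) with h | h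
      · exact h
      · exact absurd h.symm hne
    have := integral_pos (by linarith : 2*b - π < b) hFcont.continuousOn
      (fun x hx => by
        have := hpair x ⟨le_of_lt hx.1, hx.2⟩
        linarith)
      ⟨b, ⟨by linarith, le_rfl⟩, hpos⟩
    linarith [hI2z, this]
  have hb2 : 2*b - b = b := by ring
  rw [hb2] at hFb
  -- extract that the weighted integral of h vanishes
  have hsum : u b + u b = v b + v b := by
    have hcr : u (2*b - b) ≤ v b := sol_cross hα hf hf0 hb hbπ (by linarith) le_rfl
    rw [hb2] at hcr
    have hp3 : u b + u b ≤ v b + v b := by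
      have hps := sol_pair hα hf hb hbπ b
      rw [hb2] at hps
      have hnn : 0 ≤ ∫ y in (2*b - π)..b, 2 * cA α * b * (b - y) * (polar b f y - f y) := by
        apply integral_nonneg (by linarith : 2*b - π ≤ b)
        intro y hy
        exact mul_nonneg (mul_nonneg (mul_nonneg (by positivity) hb.le) (by linarith [hy.2]))
          (polar_h_nonneg hb hy.1 hy.2)
      linarith [hps, hnn]
    exact fourpoint_eq hφconv hφmono (sol_le hα hf hb hbπ (by linarith) le_rfl) hcr hp3
      (by linarith [hFb])
  have hJ : (∫ y in (2*b - π)..b, 2 * cA α * b * (b - y) * (polar b f y - f y)) = 0 := by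
    have hps := sol_pair hα hf hb hbπ b
    rw [hb2] at hps
    linarith [hps, hsum]
  -- conclude h = 0 a.e. on Ioc (2b-π) b
  have hh : IntegrableOn (fun y => polar b f y - f y) (Icc (-π) π) := hfH.sub hf
  have hJint : IntervalIntegrable (fun y => 2 * cA α * b * (b - y) * (polar b f y - f y))
      volume (2*b - π) b := by
    refine mulII ?_ hh (by linarith) (by linarith) (by linarith)
    exact (continuous_const.mul (continuous_const.sub continuous_id))
  have hnn0 : 0 ≤ᵐ[volume.restrict (Ioc (2*b - π) b)]
      fun y => 2 * cA α * b * (b - y) * (polar b f y - f y) := by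
    refine (ae_restrict_iff' measurableSet_Ioc).mpr (Filter.Eventually.of_forall fun y hy => ?_)
    exact mul_nonneg (mul_nonneg (mul_nonneg (by positivity) hb.le) (by linarith [hy.2]))
      (polar_h_nonneg hb (le_of_lt hy.1) hy.2)
  have hae0 : (fun y => 2 * cA α * b * (b - y) * (polar b f y - f y))
      =ᵐ[volume.restrict (Ioc (2*b - π) b)] 0 :=
    (integral_eq_zero_iff_of_le_of_nonneg_ae (by linarith : 2*b - π ≤ b) hnn0 hJint).mp hJ
  have haeQ : ∀ᵐ y : ℝ, y ∈ Ioc (2*b - π) b → polar b f y = f y := by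
    have h1 := (ae_restrict_iff' measurableSet_Ioc).mp hae0
    filter_upwards [h1, ae_ne_vol b] with y hy hyb hmem
    have h2 := hy hmem
    simp only [Pi.zero_apply] at h2
    have hcoef : 0 < 2 * cA α * b * (b - y) := by
      have hyb' : y < b := lt_of_le_of_ne hmem.2 hyb
      exact mul_pos (mul_pos (mul_pos two_pos (cA_pos hα)) hb) (by linarith)
    have := mul_eq_zero.mp h2
    rcases this with h | h
    · exact absurd h (ne_of_gt hcoef)
    · linarith [sub_eq_zero.mp h]
  -- transfer to the full interval
  set Q : ℝ → Prop := fun y => y ∈ Ioc (2*b - π) b → polar b f y = f y with hQdef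
  have haeQσ : ∀ᵐ y : ℝ, Q (2*b - y) :=
    (Measure.measurePreserving_sub_left volume (2*b)).quasiMeasurePreserving.ae haeQ
  rw [Filter.EventuallyEq, ae_restrict_iff' measurableSet_Icc]
  filter_upwards [haeQ, haeQσ, ae_ne_vol (2*b - π), ae_ne_vol b, ae_ne_vol π]
    with y hQy hQσy hne1 hne2 hne3 hmem
  rcases lt_trichotomy y (2*b - π) with hy | hy | hy
  · exact (polar_left hb hy).symm
  · exact absurd hy hne1
  · rcases lt_trichotomy y b with hyb | hyb | hyb
    · exact (hQy ⟨hy, hyb.le⟩).symm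
    · exact absurd hyb hne2
    · -- y ∈ (b, π]
      have hyπ : y < π := lt_of_le_of_ne hmem.2 hne3
      have hσmem : 2*b - y ∈ Ioc (2*b - π) b := ⟨by linarith, by linarith⟩
      have hσ := hQσy hσmem
      have hσ2 : polar b f (2*b - y) = max (f (2*b - y)) (f y) := by
        rw [polar_mid hb (by linarith) (by linarith)]
        congr 1
        rw [show 2*b - (2*b - y) = y by ring]
      have hmax : max (f (2*b - y)) (f y) = f (2*b - y) := by rw [← hσ2, hσ]
      have hle : f y ≤ f (2*b - y) := by
        by_contra hgt
        push_neg at hgt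
        rw [max_eq_right hgt.le] at hmax
        linarith
      rw [polar_right hb (by linarith) hyb, min_eq_left hle]

/-! ### Reflection to reduce `b < 0` to `0 < b` -/

lemma robinSol_neg (α : ℝ) (f : ℝ → ℝ) (x : ℝ) :
    robinSol α (fun t => f (-t)) x = robinSol α f (-x) := by
  rw [robinSol, robinSol]
  have h := integral_comp_neg (a := -π) (b := π) (fun y => robinGreen α (-x) y * f y)
  simp only [neg_neg] at h
  rw [← h]
  apply integral_congr
  intro y _
  dsimp only
  rw [green_neg α x y]

lemma flip_integral (α : ℝ) (f : ℝ → ℝ) (φ : ℝ → ℝ) :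
    (∫ x in (-π)..π, φ (robinSol α (fun t => f (-t)) x)) = ∫ x in (-π)..π, φ (robinSol α f x) := by
  have h := integral_comp_neg (a := -π) (b := π) (fun x => φ (robinSol α f x))
  simp only [neg_neg] at h
  rw [← h]
  apply integral_congr
  intro x _
  dsimp only
  rw [robinSol_neg]

lemma polar_neg {b : ℝ} (hbl : -π < b) (hb : b < 0) (f : ℝ → ℝ) (x : ℝ) :
    polar (-b) (fun t => f (-t)) x = polar b f (-x) := by
  have hπ := pi_pos
  have hb' : (0:ℝ) < -b := by linarith
  have hnb : ¬ (0 < b) := by linarith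
  by_cases h1 : x < 2*(-b) - π
  · rw [show polar b f (-x) = f (-x) from ?_]
    · simp only [polar, if_pos hb', if_pos h1]
    · simp only [polar, if_neg hnb, if_neg (by linarith : ¬ (-x ≤ b)),
        if_neg (by linarith : ¬ (-x ≤ 2*b + π))]
  · by_cases h2 : x ≤ -b
    · by_cases h3 : -x ≤ b
      · have hx : x = -b := by linarith
        simp only [polar, if_pos hb', if_neg h1, if_pos h2, if_neg hnb, if_pos h3]
        rw [show -(2*(-b) - x) = 2*b - -x by ring]
        rw [show (2*b - -x) = -x by rw [hx]; ring, max_self, min_self]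
      · simp only [polar, if_pos hb', if_neg h1, if_pos h2, if_neg hnb, if_neg h3,
          if_pos (by linarith : -x ≤ 2*b + π)]
        rw [show -(2*(-b) - x) = 2*b - -x by ring]
    · simp only [polar, if_pos hb', if_neg h1, if_neg h2, if_neg hnb,
        if_pos (by linarith : -x ≤ b)]
      rw [show -(2*(-b) - x) = 2*b - -x by ring]

lemma integrableOn_neg {f : ℝ → ℝ} (hf : IntegrableOn f (Icc (-π) π)) :
    IntegrableOn (fun t => f (-t)) (Icc (-π) π) := by
  have hπ := pi_pos
  have h1 : IntervalIntegrable f volume (-π) π :=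
    (intervalIntegrable_iff_integrableOn_Icc_of_le (by linarith)).mpr hf
  have h2 := ((IntervalIntegrable.iff_comp_neg).mp h1).symm
  simp only [neg_neg] at h2
  exact (intervalIntegrable_iff_integrableOn_Icc_of_le (by linarith)).mp h2

/-- **Polarization and convex integral means: equality case.** -/
theorem polarization_convex_integral_means_eq_iff
    (α : ℝ) (hα : 0 < α)
    (f : ℝ → ℝ) (hf : IntegrableOn f (Icc (-π) π))
    (hf0 : ∀ x ∈ Icc (-π) π, 0 ≤ f x)
    (b : ℝ) (hb : b ∈ Ioo (-π) 0 ∪ Ioo 0 π)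
    (φ : ℝ → ℝ) (hφconv : ConvexOn ℝ univ φ) (hφmono : StrictMono φ) :
    (∫ x in (-π)..π, φ (robinSol α f x)) = (∫ x in (-π)..π, φ (robinSol α (polar b f) x)) ↔
      f =ᵐ[volume.restrict (Icc (-π) π)] polar b f := by
  have hπ := pi_pos
  constructor
  · intro heq
    rcases hb with hbneg | hbpos
    · -- b < 0 : reduce to the positive case via reflection
      set g : ℝ → ℝ := fun t => f (-t) with hg_def
      have hg : IntegrableOn g (Icc (-π) π) := integrableOn_neg hf
      have hg0 : ∀ x ∈ Icc (-π) π, 0 ≤ g x := fun x hx =>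
        hf0 (-x) ⟨by linarith [hx.2], by linarith [hx.1]⟩
      have hpolar : polar (-b) g = fun x => polar b f (-x) :=
        funext fun x => polar_neg hbneg.1 hbneg.2 f x
      have heq' : (∫ x in (-π)..π, φ (robinSol α g x))
          = ∫ x in (-π)..π, φ (robinSol α (polar (-b) g) x) := by
        rw [flip_integral α f φ, hpolar]
        have : (∫ x in (-π)..π, φ (robinSol α (fun x => polar b f (-x)) x))
            = ∫ x in (-π)..π, φ (robinSol α (polar b f) x) :=
          flip_integral α (polar b f) φ
        rw [this]
        exact heq
      have hmain := main_pos α hα g hg hg0 (by linarith [hbneg.2] : 0 < -b)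
        (by linarith [hbneg.1] : -b < π) φ hφconv hφmono heq'
      -- transfer back
      rw [Filter.EventuallyEq, ae_restrict_iff' measurableSet_Icc] at hmain ⊢
      have hmain' : ∀ᵐ y : ℝ, -y ∈ Icc (-π) π → g (-y) = polar (-b) g (-y) :=
        (Measure.measurePreserving_neg volume).quasiMeasurePreserving.ae hmain
      filter_upwards [hmain'] with y hy hmem
      have h1 : -y ∈ Icc (-π) π := ⟨by linarith [hmem.2], by linarith [hmem.1]⟩
      have h2 := hy h1
      rw [hpolar] at h2
      simp only [hg_def, neg_neg] at h2
      exact h2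
    · exact main_pos α hα f hf hf0 hbpos.1 hbpos.2 φ hφconv hφmono heq
  · intro hae
    have hsol : ∀ x, robinSol α f x = robinSol α (polar b f) x := by
      intro x
      apply intervalIntegral.integral_congr_ae
      have h1 := (ae_restrict_iff' measurableSet_Icc).mp hae
      filter_upwards [h1] with y hy hmem
      rw [uIoc_of_le (by linarith : -π ≤ π)] at hmem
      rw [hy ⟨le_of_lt hmem.1, hmem.2⟩]
    exact integral_congr fun x _ => by rw [hsol x]
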